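/- Suppose {a_n}_{n=0}^∞ is a Stieltjes moment sequence with representing measure μ, κ is an integer ≥ 2, and {a_n^{1/κ}}_{n=0}^∞ is a Stieltjes moment sequence with representing measure ν. Let θ1, θ2 be real numbers with 0 ≤ θ1 < θ2, and set α = (θ1/θ2)·θ2^{1/κ} and β = θ2^{1/κ}. Then the following are equivalent: (a) θ1 ∈ supp μ, θ2 = sup supp μ and μ((θ1,θ2)) = 0; (b) α ∈ supp ν, β = sup supp ν and ν((α,β)) = 0. -/

import Mathlib

open MeasureTheory

/-- The closed support of a Borel measure: the set of points all of whose open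
neighbourhoods have positive measure. -/
def msupport {X : Type*} [TopologicalSpace X] [MeasurableSpace X] (μ : Measure X) : Set X :=
  {x | ∀ U : Set X, IsOpen U → x ∈ U → 0 < μ U}

/-- `μ` is a representing measure (on `[0,∞)`, modelled as a measure on `ℝ` vanishing on
`(-∞,0)`) of the Stieltjes moment sequence `a`. -/
def IsRepMeas (a : ℕ → ℝ) (μ : Measure ℝ) : Prop :=
  (∀ n, 0 ≤ a n) ∧ μ (Set.Iio 0) = 0 ∧
    ∀ n : ℕ, ∫⁻ x, ENNReal.ofReal (x ^ n) ∂μ = ENNReal.ofReal (a n)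

/-- `a` is a Stieltjes moment sequence. -/
def IsStieltjes (a : ℕ → ℝ) : Prop :=
  ∃ μ : Measure ℝ, IsRepMeas a μ

/-- A Stieltjes moment sequence is determinate if it has a unique representing measure. -/
def IsDeterminate (a : ℕ → ℝ) : Prop :=
  ∀ μ ν : Measure ℝ, IsRepMeas a μ → IsRepMeas a ν → μ = ν

open Set Filter

/-- Sequence-level condition capturing: `θ2` carries an atom of weight `c`,
rest of the mass sits in `[0, θ1]`, with mass clustering at `θ1`. -/
def QSeq (a : ℕ → ℝ) (θ1 θ2 : ℝ) : Prop :=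
  ∃ c : ℝ, 0 < c ∧
    (∃ C : ℝ, 0 ≤ C ∧ ∀ n : ℕ, c * θ2 ^ n ≤ a n ∧ a n ≤ c * θ2 ^ n + C * θ1 ^ n) ∧
    (∀ ε : ℝ, 0 < ε → ∃ m : ℝ, 0 < m ∧
      ∀ n : ℕ, c * θ2 ^ n + m * (max (θ1 - ε) 0) ^ n ≤ a n)

lemma chord_up {p U : ℝ} (hp : 0 < p) (hU : 0 < U) :
    ∃ K : ℝ, 0 < K ∧ ∀ u : ℝ, 0 ≤ u → u ≤ U → (1 + u) ^ p ≤ 1 + K * u := by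
  rcases le_or_gt p 1 with hp1 | hp1
  · refine ⟨1, one_pos, fun u hu huU => ?_⟩
    calc (1 + u) ^ p ≤ (1 + u) ^ (1 : ℝ) :=
          Real.rpow_le_rpow_of_exponent_le (by linarith) hp1
    _ = 1 + 1 * u := by rw [Real.rpow_one]; ring
  · refine ⟨((1 + U) ^ p - 1) / U, div_pos (by
      have : (1:ℝ) ^ p < (1 + U) ^ p := Real.rpow_lt_rpow (by norm_num) (by linarith) hp
      rw [Real.one_rpow] at this; linarith) hU, fun u hu huU => ?_⟩
    have hcv := convexOn_rpow hp1.le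
    have h1 : (1 : ℝ) ∈ Ici (0:ℝ) := by norm_num
    have h2 : (1 + U : ℝ) ∈ Ici (0:ℝ) := by simp; linarith
    have ht1 : (0:ℝ) ≤ 1 - u / U := by
      have : u / U ≤ 1 := (div_le_one hU).2 huU
      linarith
    have ht2 : (0:ℝ) ≤ u / U := div_nonneg hu hU.le
    have hsum : (1 - u / U) + u / U = 1 := by ring
    have := hcv.2 h1 h2 ht1 ht2 hsum
    have heq : (1 - u / U) • (1:ℝ) + (u / U) • (1 + U) = 1 + u := by
      simp only [smul_eq_mul]
      field_simp
      ring
    rw [heq] at this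
    simp only [smul_eq_mul, Real.one_rpow] at this
    calc (1 + u) ^ p ≤ (1 - u / U) * 1 + u / U * (1 + U) ^ p := this
    _ = 1 + ((1 + U) ^ p - 1) / U * u := by field_simp; ring

lemma chord_lo {p U : ℝ} (hp : 0 < p) (hU : 0 < U) :
    ∃ δ : ℝ, 0 < δ ∧ ∀ u : ℝ, 0 ≤ u → u ≤ U → 1 + δ * u ≤ (1 + u) ^ p := by
  rcases lt_or_ge p 1 with hp1 | hp1
  · refine ⟨((1 + U) ^ p - 1) / U, div_pos (by
      have : (1:ℝ) ^ p < (1 + U) ^ p := Real.rpow_lt_rpow (by norm_num) (by linarith) hp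
      rw [Real.one_rpow] at this; linarith) hU, fun u hu huU => ?_⟩
    have hcv := (Real.strictConcaveOn_rpow hp hp1).concaveOn
    have h1 : (1 : ℝ) ∈ Ici (0:ℝ) := by norm_num
    have h2 : (1 + U : ℝ) ∈ Ici (0:ℝ) := by simp; linarith
    have ht1 : (0:ℝ) ≤ 1 - u / U := by
      have : u / U ≤ 1 := (div_le_one hU).2 huU
      linarith
    have ht2 : (0:ℝ) ≤ u / U := div_nonneg hu hU.le
    have hsum : (1 - u / U) + u / U = 1 := by ring
    have := hcv.2 h1 h2 ht1 ht2 hsum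
    have heq : (1 - u / U) • (1:ℝ) + (u / U) • (1 + U) = 1 + u := by
      simp only [smul_eq_mul]
      field_simp; ring
    rw [heq] at this
    simp only [smul_eq_mul, Real.one_rpow] at this
    calc 1 + ((1 + U) ^ p - 1) / U * u = (1 - u / U) * 1 + u / U * (1 + U) ^ p := by
          field_simp; ring
    _ ≤ (1 + u) ^ p := this
  · refine ⟨1, one_pos, fun u hu huU => ?_⟩
    calc 1 + 1 * u = (1 + u) ^ (1:ℝ) := by rw [Real.rpow_one]; ring
    _ ≤ (1 + u) ^ p := Real.rpow_le_rpow_of_exponent_le (by linarith) hp1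

lemma pow_rpow_comm {x : ℝ} (hx : 0 ≤ x) (p : ℝ) (n : ℕ) :
    (x ^ n) ^ p = (x ^ p) ^ n := by
  rw [← Real.rpow_natCast x n, ← Real.rpow_natCast (x ^ p) n,
    ← Real.rpow_mul hx, ← Real.rpow_mul hx, mul_comm]

lemma QSeq_rpow {a : ℕ → ℝ} {θ1 θ2 p : ℝ} (h1 : 0 ≤ θ1) (h12 : θ1 < θ2)
    (hp : 0 < p) (hQ : QSeq a θ1 θ2) :
    QSeq (fun n => a n ^ p) (θ1 / θ2 * θ2 ^ p) (θ2 ^ p) := by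
  obtain ⟨c, hc, ⟨C, hC, hbd⟩, hlow⟩ := hQ
  have hθ2 : 0 < θ2 := lt_of_le_of_lt h1 h12
  have hθ2p : 0 < θ2 ^ p := Real.rpow_pos_of_pos hθ2 p
  have hXpos : ∀ n : ℕ, 0 < c * θ2 ^ n := fun n => mul_pos hc (pow_pos hθ2 n)
  have hXp : ∀ n : ℕ, (c * θ2 ^ n) ^ p = c ^ p * (θ2 ^ p) ^ n := by
    intro n
    rw [Real.mul_rpow hc.le (pow_pos hθ2 n).le, pow_rpow_comm hθ2.le]
  have hr01 : 0 ≤ θ1 / θ2 := div_nonneg h1 hθ2.le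
  have hr1 : θ1 / θ2 < 1 := (div_lt_one hθ2).2 h12
  refine ⟨c ^ p, Real.rpow_pos_of_pos hc p, ?_, ?_⟩
  · -- two-sided bound
    obtain ⟨K, hK, hch⟩ := chord_up hp (by positivity : (0:ℝ) < C / c + 1)
    refine ⟨c ^ p * K * (C / c), by positivity, fun n => ?_⟩
    constructor
    · have := Real.rpow_le_rpow (hXpos n).le (hbd n).1 hp.le
      rw [hXp n] at this; exact this
    · have hu : c * θ2 ^ n + C * θ1 ^ n
          = (c * θ2 ^ n) * (1 + (C / c) * (θ1 / θ2) ^ n) := by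
        rw [div_pow]; field_simp
      have hun0 : 0 ≤ (C / c) * (θ1 / θ2) ^ n := by positivity
      have hunU : (C / c) * (θ1 / θ2) ^ n ≤ C / c + 1 := by
        have : (θ1 / θ2) ^ n ≤ 1 := pow_le_one₀ hr01 hr1.le
        nlinarith [div_nonneg hC hc.le]
      have h2 : a n ^ p ≤ ((c * θ2 ^ n) * (1 + (C / c) * (θ1 / θ2) ^ n)) ^ p := by
        refine Real.rpow_le_rpow ?_ ?_ hp.le
        · have := (hbd n).1; nlinarith [hXpos n]
        · rw [← hu]; exact (hbd n).2
      have h3 : ((c * θ2 ^ n) * (1 + (C / c) * (θ1 / θ2) ^ n)) ^ p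
          = (c * θ2 ^ n) ^ p * (1 + (C / c) * (θ1 / θ2) ^ n) ^ p :=
        Real.mul_rpow (hXpos n).le (by positivity)
      have h4 : (1 + (C / c) * (θ1 / θ2) ^ n) ^ p ≤ 1 + K * ((C / c) * (θ1 / θ2) ^ n) :=
        hch _ hun0 hunU
      calc a n ^ p ≤ (c * θ2 ^ n) ^ p * (1 + (C / c) * (θ1 / θ2) ^ n) ^ p := by
            rw [← h3]; exact h2
      _ ≤ (c * θ2 ^ n) ^ p * (1 + K * ((C / c) * (θ1 / θ2) ^ n)) := by
            refine mul_le_mul_of_nonneg_left h4 (Real.rpow_nonneg (hXpos n).le p)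
      _ = c ^ p * (θ2 ^ p) ^ n + c ^ p * K * (C / c) * (θ1 / θ2 * θ2 ^ p) ^ n := by
            rw [hXp n, mul_pow]
            ring
  · -- the ε clause
    intro ε' hε'
    set ε : ℝ := ε' * θ2 / θ2 ^ p with hεdef
    have hε : 0 < ε := by positivity
    obtain ⟨m, hm, hmn⟩ := hlow ε hε
    obtain ⟨δ, hδ, hch⟩ := chord_lo hp (by positivity : (0:ℝ) < m / c)
    refine ⟨c ^ p * δ * (m / c), by positivity, fun n => ?_⟩
    set t : ℝ := max (θ1 - ε) 0 with htdef
    have ht0 : 0 ≤ t := le_max_right _ _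
    have htθ2 : t / θ2 ≤ 1 := by
      rw [div_le_one hθ2]
      exact max_le (by linarith) hθ2.le
    have hu : c * θ2 ^ n + m * t ^ n = (c * θ2 ^ n) * (1 + (m / c) * (t / θ2) ^ n) := by
      rw [div_pow]; field_simp
    have hun0 : 0 ≤ (m / c) * (t / θ2) ^ n := by positivity
    have hunU : (m / c) * (t / θ2) ^ n ≤ m / c := by
      have h1' : (t / θ2) ^ n ≤ 1 := pow_le_one₀ (by positivity) htθ2
      nlinarith [div_pos hm hc]
    have hstep : ((c * θ2 ^ n) * (1 + (m / c) * (t / θ2) ^ n)) ^ p ≤ a n ^ p := by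
      refine Real.rpow_le_rpow (by positivity) ?_ hp.le
      rw [← hu]; exact hmn n
    have h3 : ((c * θ2 ^ n) * (1 + (m / c) * (t / θ2) ^ n)) ^ p
        = (c * θ2 ^ n) ^ p * (1 + (m / c) * (t / θ2) ^ n) ^ p :=
      Real.mul_rpow (hXpos n).le (by positivity)
    have h4 : 1 + δ * ((m / c) * (t / θ2) ^ n) ≤ (1 + (m / c) * (t / θ2) ^ n) ^ p :=
      hch _ hun0 hunU
    have hmax : max (θ1 / θ2 * θ2 ^ p - ε') 0 = t * (θ2 ^ p / θ2) := by
      rw [htdef, max_mul_of_nonneg _ _ (by positivity : (0:ℝ) ≤ θ2 ^ p / θ2), zero_mul]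
      congr 1
      rw [hεdef]
      field_simp
    calc c ^ p * (θ2 ^ p) ^ n + c ^ p * δ * (m / c) * (max (θ1 / θ2 * θ2 ^ p - ε') 0) ^ n
        = (c * θ2 ^ n) ^ p * (1 + δ * ((m / c) * (t / θ2) ^ n)) := by
          rw [hmax, hXp n, mul_pow, div_pow, div_pow]
          field_simp
    _ ≤ (c * θ2 ^ n) ^ p * (1 + (m / c) * (t / θ2) ^ n) ^ p :=
          mul_le_mul_of_nonneg_left h4 (Real.rpow_nonneg (hXpos n).le p)
    _ ≤ a n ^ p := by rw [← h3]; exact hstep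

lemma isClosed_msupport {X : Type*} [TopologicalSpace X] [MeasurableSpace X]
    (μ : Measure X) : IsClosed (msupport μ) := by
  rw [← isOpen_compl_iff]
  rw [isOpen_iff_mem_nhds]
  intro x hx
  simp only [msupport, mem_compl_iff, mem_setOf_eq, not_forall] at hx
  obtain ⟨U, hU, hxU, hμU⟩ := hx
  push_neg at hμU
  have hμU0 : μ U = 0 := le_antisymm hμU zero_le
  refine Filter.mem_of_superset (hU.mem_nhds hxU) ?_
  intro y hy
  simp only [msupport, mem_compl_iff, mem_setOf_eq, not_forall]
  exact ⟨U, hU, hy, by simp [hμU0]⟩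

lemma msupport_compl_null (μ : Measure ℝ) : μ (msupport μ)ᶜ = 0 := by
  have hch : ∀ x : ((msupport μ)ᶜ : Set ℝ), ∃ U : Set ℝ, IsOpen U ∧ (x : ℝ) ∈ U ∧ μ U = 0 := by
    rintro ⟨x, hx⟩
    simp only [msupport, mem_compl_iff, mem_setOf_eq, not_forall] at hx
    obtain ⟨U, hU, hxU, hμU⟩ := hx
    push_neg at hμU
    exact ⟨U, hU, hxU, le_antisymm hμU zero_le⟩
  choose U hUo hUx hUn using hch
  obtain ⟨T, hTc, hTU⟩ := TopologicalSpace.isOpen_iUnion_countable U hUo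
  have hsub : (msupport μ)ᶜ ⊆ ⋃ i ∈ T, U i := by
    rw [hTU]
    intro x hx
    exact mem_iUnion.2 ⟨⟨x, hx⟩, hUx _⟩
  have hz : μ (⋃ i ∈ T, U i) = 0 := by
    haveI := hTc.to_subtype
    rw [biUnion_eq_iUnion]
    exact measure_iUnion_null fun i => hUn _
  exact measure_mono_null hsub hz


lemma repMeas_univ {a : ℕ → ℝ} {μ : Measure ℝ} (hμ : IsRepMeas a μ) : μ Set.univ = ENNReal.ofReal (a 0) := by
  have := hμ.2.2 0
  simpa using this

lemma repMeas_fin {a : ℕ → ℝ} {μ : Measure ℝ} (hμ : IsRepMeas a μ) {S : Set ℝ} : μ S ≠ ⊤ := by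
  refine ne_top_of_le_ne_top ?_ (measure_mono (subset_univ S))
  rw [repMeas_univ hμ]
  exact ENNReal.ofReal_ne_top

/-- Lower bound: atom at θ2 plus mass on a set `S ⊆ [t,∞)` avoiding θ2. -/
lemma mom_ge_decomp {a : ℕ → ℝ} {μ : Measure ℝ} (hμ : IsRepMeas a μ) {θ2 t : ℝ} (hθ2 : 0 ≤ θ2) (ht : 0 ≤ t)
    {S : Set ℝ} (hS : MeasurableSet S) (hsub : S ⊆ Ici t) (hne : θ2 ∉ S) (n : ℕ) :
    (μ {θ2}).toReal * θ2 ^ n + (μ S).toReal * t ^ n ≤ a n := by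
  have hmeas : Measurable fun x : ℝ => ENNReal.ofReal (x ^ n) :=
    (measurable_id.pow_const n).ennreal_ofReal
  have hdisj : Disjoint ({θ2} : Set ℝ) S := by
    simp [disjoint_left, hne]
  have key : ENNReal.ofReal ((μ {θ2}).toReal * θ2 ^ n + (μ S).toReal * t ^ n)
      ≤ ENNReal.ofReal (a n) := by
    rw [← hμ.2.2 n]
    calc ENNReal.ofReal ((μ {θ2}).toReal * θ2 ^ n + (μ S).toReal * t ^ n)
        = ENNReal.ofReal (θ2 ^ n) * μ {θ2} + ENNReal.ofReal (t ^ n) * μ S := by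
          rw [ENNReal.ofReal_add (by positivity) (by positivity),
            ENNReal.ofReal_mul (ENNReal.toReal_nonneg), ENNReal.ofReal_mul (ENNReal.toReal_nonneg),
            ENNReal.ofReal_toReal (repMeas_fin hμ), ENNReal.ofReal_toReal (repMeas_fin hμ)]
          ring
    _ ≤ ∫⁻ x in {θ2}, ENNReal.ofReal (x ^ n) ∂μ + ∫⁻ x in S, ENNReal.ofReal (x ^ n) ∂μ := by
          gcongr
          · rw [lintegral_singleton]
          · calc ENNReal.ofReal (t ^ n) * μ S = ∫⁻ _ in S, ENNReal.ofReal (t ^ n) ∂μ := by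
                  rw [setLIntegral_const]
            _ ≤ ∫⁻ x in S, ENNReal.ofReal (x ^ n) ∂μ := by
                  refine setLIntegral_mono hmeas fun x hx => ?_
                  exact ENNReal.ofReal_le_ofReal (pow_le_pow_left₀ ht (hsub hx) n)
    _ = ∫⁻ x in {θ2} ∪ S, ENNReal.ofReal (x ^ n) ∂μ := (lintegral_union hS hdisj).symm
    _ ≤ ∫⁻ x, ENNReal.ofReal (x ^ n) ∂μ := setLIntegral_le_lintegral _ _
  exact (ENNReal.ofReal_le_ofReal_iff (hμ.1 n)).1 key

/-- Upper bound when all mass is on `[0,s] ∪ {θ2}`. -/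
lemma mom_le_decomp {a : ℕ → ℝ} {μ : Measure ℝ} (hμ : IsRepMeas a μ) {θ2 s : ℝ} (hθ2 : 0 ≤ θ2) (hs : 0 ≤ s)
    (hIoi : μ (Ioi θ2) = 0) (hgap : μ (Ioo s θ2) = 0) (n : ℕ) :
    a n ≤ (μ {θ2}).toReal * θ2 ^ n + a 0 * s ^ n := by
  have hmeas : Measurable fun x : ℝ => ENNReal.ofReal (x ^ n) :=
    (measurable_id.pow_const n).ennreal_ofReal
  have hN : μ (Iio 0 ∪ (Ioo s θ2 ∪ Ioi θ2)) = 0 :=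
    measure_union_null hμ.2.1 (measure_union_null hgap hIoi)
  have hae : ∀ᵐ x ∂μ, x ∈ ({θ2}ᶜ : Set ℝ) → ENNReal.ofReal (x ^ n) ≤ ENNReal.ofReal (s ^ n) := by
    rw [ae_iff]
    refine measure_mono_null ?_ hN
    intro x hx
    simp only [mem_setOf_eq, not_forall, mem_compl_iff, mem_singleton_iff] at hx
    obtain ⟨hxne, hxgt⟩ := hx
    by_contra hmem
    simp only [mem_union, mem_Iio, mem_Ioo, mem_Ioi, not_or, not_and, not_lt] at hmem
    obtain ⟨hx0, hx1, hx2⟩ := hmem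
    have : x ≤ s := by
      rcases le_or_gt x s with h | h
      · exact h
      · exact absurd (le_antisymm hx2 (hx1 h)) hxne
    exact hxgt (ENNReal.ofReal_le_ofReal (pow_le_pow_left₀ hx0 this n))
  have key : ENNReal.ofReal (a n)
      ≤ ENNReal.ofReal ((μ {θ2}).toReal * θ2 ^ n + a 0 * s ^ n) := by
    rw [← hμ.2.2 n, ← lintegral_add_compl (fun x => ENNReal.ofReal (x ^ n))
      (measurableSet_singleton θ2)]
    calc ∫⁻ x in {θ2}, ENNReal.ofReal (x ^ n) ∂μ
          + ∫⁻ x in {θ2}ᶜ, ENNReal.ofReal (x ^ n) ∂μ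
        ≤ ENNReal.ofReal (θ2 ^ n) * μ {θ2} + ENNReal.ofReal (s ^ n) * μ univ := by
          gcongr
          · rw [lintegral_singleton]
          · calc ∫⁻ x in {θ2}ᶜ, ENNReal.ofReal (x ^ n) ∂μ
                ≤ ∫⁻ _ in ({θ2}ᶜ : Set ℝ), ENNReal.ofReal (s ^ n) ∂μ :=
                  setLIntegral_mono_ae aemeasurable_const hae
            _ = ENNReal.ofReal (s ^ n) * μ {θ2}ᶜ := setLIntegral_const _ _
            _ ≤ ENNReal.ofReal (s ^ n) * μ univ := by gcongr; exact subset_univ _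
    _ = ENNReal.ofReal ((μ {θ2}).toReal * θ2 ^ n + a 0 * s ^ n) := by
          rw [repMeas_univ hμ,
            ENNReal.ofReal_add (mul_nonneg ENNReal.toReal_nonneg (pow_nonneg hθ2 n))
              (mul_nonneg (hμ.1 0) (pow_nonneg hs n)),
            ENNReal.ofReal_mul ENNReal.toReal_nonneg,
            ENNReal.ofReal_toReal (repMeas_fin hμ), ENNReal.ofReal_mul (hμ.1 0)]
          ring
  exact (ENNReal.ofReal_le_ofReal_iff
    (add_nonneg (mul_nonneg ENNReal.toReal_nonneg (pow_nonneg hθ2 n))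
      (mul_nonneg (hμ.1 0) (pow_nonneg hs n)))).1 key


lemma gap_null {a : ℕ → ℝ} {μ : Measure ℝ} (hμ : IsRepMeas a μ) {θ1 θ2 c C : ℝ}
    (h1 : 0 ≤ θ1) (h12 : θ1 < θ2) (hc : 0 ≤ c) (hC : 0 ≤ C)
    (hlo : ∀ n : ℕ, c * θ2 ^ n ≤ a n) (hup : ∀ n : ℕ, a n ≤ c * θ2 ^ n + C * θ1 ^ n)
    (hIoi : μ (Ioi θ2) = 0) : μ (Ioo θ1 θ2) = 0 := by
  have hθ2 : 0 < θ2 := lt_of_le_of_lt h1 h12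
  -- step A
  have stepA : ∀ γ : ℝ, θ1 < γ → γ < θ2 → μ (Ioo γ ((γ + θ2) / 2)) = 0 := by
    intro γ hγ1 hγ2
    by_contra hpos
    have hγ0 : 0 < γ := lt_of_le_of_lt h1 hγ1
    set S : Set ℝ := Ioo γ ((γ + θ2) / 2) with hSdef
    have hq0 : 0 < (μ S).toReal := ENNReal.toReal_pos hpos (repMeas_fin hμ)
    set q : ℝ := (μ S).toReal with hqdef
    have hμS : μ S = ENNReal.ofReal q := (ENNReal.ofReal_toReal (repMeas_fin hμ)).symm
    have key : ∀ n : ℕ, γ ^ n * ((θ2 - γ) / 2) * q ≤ C * θ2 * θ1 ^ n := by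
      intro n
      have hf_meas : Measurable fun x : ℝ => ENNReal.ofReal (x ^ n * (θ2 - x)) :=
        ((measurable_id.pow_const n).mul (measurable_const.sub measurable_id)).ennreal_ofReal
      have hxn_meas : Measurable fun x : ℝ => ENNReal.ofReal (x ^ (n + 1)) :=
        (measurable_id.pow_const (n + 1)).ennreal_ofReal
      set I : ENNReal := ∫⁻ x, ENNReal.ofReal (x ^ n * (θ2 - x)) ∂μ with hIdef
      -- split identity
      have hsplit : I + ENNReal.ofReal (a (n + 1)) = ENNReal.ofReal (θ2 * a n) := by
        have hae : ∀ᵐ x ∂μ, ENNReal.ofReal (x ^ n * (θ2 - x)) + ENNReal.ofReal (x ^ (n + 1))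
            = ENNReal.ofReal (θ2 * x ^ n) := by
          rw [ae_iff]
          refine measure_mono_null ?_ (measure_union_null hμ.2.1 hIoi)
          intro x hx
          simp only [mem_setOf_eq] at hx
          by_contra hmem
          simp only [mem_union, mem_Iio, mem_Ioi, not_or, not_lt] at hmem
          obtain ⟨hx0, hx2⟩ := hmem
          refine hx ?_
          rw [← ENNReal.ofReal_add (mul_nonneg (pow_nonneg hx0 n) (by linarith))
            (pow_nonneg hx0 _)]
          congr 1
          ring
        calc I + ENNReal.ofReal (a (n + 1))
            = (∫⁻ x, ENNReal.ofReal (x ^ n * (θ2 - x)) ∂μ)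
              + ∫⁻ x, ENNReal.ofReal (x ^ (n + 1)) ∂μ := by rw [hμ.2.2 (n + 1)]
        _ = ∫⁻ x, (ENNReal.ofReal (x ^ n * (θ2 - x)) + ENNReal.ofReal (x ^ (n + 1))) ∂μ :=
              (lintegral_add_left hf_meas _).symm
        _ = ∫⁻ x, ENNReal.ofReal (θ2 * x ^ n) ∂μ := lintegral_congr_ae hae
        _ = ∫⁻ x, ENNReal.ofReal θ2 * ENNReal.ofReal (x ^ n) ∂μ := by
              simp_rw [← ENNReal.ofReal_mul hθ2.le]
        _ = ENNReal.ofReal θ2 * ENNReal.ofReal (a n) := by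
              rw [lintegral_const_mul' _ _ ENNReal.ofReal_ne_top, hμ.2.2 n]
        _ = ENNReal.ofReal (θ2 * a n) := (ENNReal.ofReal_mul hθ2.le).symm
      -- upper bound on I
      have hIub : I ≤ ENNReal.ofReal (C * θ2 * θ1 ^ n) := by
        have h2n : ENNReal.ofReal (θ2 * a n)
            ≤ ENNReal.ofReal (a (n + 1)) + ENNReal.ofReal (C * θ2 * θ1 ^ n) := by
          calc ENNReal.ofReal (θ2 * a n)
              ≤ ENNReal.ofReal (c * θ2 ^ (n + 1) + C * θ2 * θ1 ^ n) := by
                refine ENNReal.ofReal_le_ofReal ?_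
                have h := hup n
                nlinarith [mul_le_mul_of_nonneg_left h hθ2.le, pow_succ θ2 n]
          _ = ENNReal.ofReal (c * θ2 ^ (n + 1)) + ENNReal.ofReal (C * θ2 * θ1 ^ n) := by
                rw [← ENNReal.ofReal_add (by positivity) (by positivity)]
          _ ≤ ENNReal.ofReal (a (n + 1)) + ENNReal.ofReal (C * θ2 * θ1 ^ n) :=
                add_le_add (ENNReal.ofReal_le_ofReal (hlo (n + 1))) le_rfl
        have := hsplit.le.trans h2n
        rw [add_comm (ENNReal.ofReal (a (n + 1)))] at this
        exact (ENNReal.add_le_add_iff_right ENNReal.ofReal_ne_top).1 this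
      -- lower bound on I
      have hIlb : ENNReal.ofReal (γ ^ n * ((θ2 - γ) / 2)) * μ S ≤ I := by
        calc ENNReal.ofReal (γ ^ n * ((θ2 - γ) / 2)) * μ S
            = ∫⁻ _ in S, ENNReal.ofReal (γ ^ n * ((θ2 - γ) / 2)) ∂μ :=
              (setLIntegral_const _ _).symm
        _ ≤ ∫⁻ x in S, ENNReal.ofReal (x ^ n * (θ2 - x)) ∂μ := by
              refine setLIntegral_mono hf_meas fun x hx => ?_
              refine ENNReal.ofReal_le_ofReal ?_
              obtain ⟨hxl, hxr⟩ := hx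
              have hx0 : 0 ≤ x := le_of_lt (lt_of_lt_of_le hγ0 hxl.le)
              refine mul_le_mul (pow_le_pow_left₀ hγ0.le hxl.le n) (by linarith)
                (by linarith) (by positivity)
        _ ≤ I := setLIntegral_le_lintegral _ _
      have := hIlb.trans hIub
      rw [hμS, ← ENNReal.ofReal_mul (mul_nonneg (pow_nonneg hγ0.le n) (by linarith))] at this
      exact (ENNReal.ofReal_le_ofReal_iff
        (mul_nonneg (mul_nonneg hC hθ2.le) (pow_nonneg h1 n))).1 this
    -- contradiction via n → ∞
    have hlim : Tendsto (fun n : ℕ => C * θ2 * (θ1 / γ) ^ n) atTop (nhds 0) := by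
      have h0' : 0 ≤ θ1 / γ := div_nonneg h1 hγ0.le
      have hlt : θ1 / γ < 1 := (div_lt_one hγ0).2 hγ1
      have := (tendsto_pow_atTop_nhds_zero_of_lt_one h0' hlt).const_mul (C * θ2)
      simpa using this
    have hble : ((θ2 - γ) / 2) * q ≤ 0 := by
      refine ge_of_tendsto' hlim fun n => ?_
      have := key n
      have hγn : 0 < γ ^ n := pow_pos hγ0 n
      rw [div_pow, ← sub_nonneg]
      have expand : C * θ2 * (θ1 ^ n / γ ^ n) - (θ2 - γ) / 2 * q
          = (C * θ2 * θ1 ^ n - γ ^ n * ((θ2 - γ) / 2) * q) / γ ^ n := by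
        field_simp
      rw [expand]
      exact div_nonneg (sub_nonneg.2 this) hγn.le
    nlinarith [hq0, hγ2]
  -- step B: cover (θ1, θ2) by rational intervals
  set u : ℚ → Set ℝ := fun r =>
    if θ1 < (r : ℝ) ∧ (r : ℝ) < θ2 then Ioo (r : ℝ) (((r : ℝ) + θ2) / 2) else ∅ with hu
  have hnull : ∀ r : ℚ, μ (u r) = 0 := by
    intro r
    simp only [hu]
    split_ifs with h
    · exact stepA _ h.1 h.2
    · simp
  refine measure_mono_null ?_ (measure_iUnion_null hnull)
  intro x hx
  obtain ⟨hx1, hx2⟩ := hx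
  obtain ⟨r, hr1, hr2⟩ := exists_rat_btwn (show max θ1 (2 * x - θ2) < x from
    max_lt hx1 (by linarith))
  have hrθ1 : θ1 < (r : ℝ) := lt_of_le_of_lt (le_max_left _ _) hr1
  have hrx : (2 : ℝ) * x - θ2 < r := lt_of_le_of_lt (le_max_right _ _) hr1
  refine mem_iUnion.2 ⟨r, ?_⟩
  simp only [hu]
  have hcond : θ1 < (r : ℝ) ∧ (r : ℝ) < θ2 := ⟨hrθ1, lt_trans hr2 hx2⟩
  rw [if_pos hcond]
  exact ⟨hr2, by push_cast; linarith⟩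

lemma ratio_limit {m C s t : ℝ} (hs : 0 ≤ s) (hst : s < t) (hC : 0 ≤ C)
    (h : ∀ n : ℕ, m * t ^ n ≤ C * s ^ n) : m ≤ 0 := by
  have ht : 0 < t := lt_of_le_of_lt hs hst
  have hlim : Tendsto (fun n : ℕ => C * (s / t) ^ n) atTop (nhds 0) := by
    have := (tendsto_pow_atTop_nhds_zero_of_lt_one (div_nonneg hs ht.le)
      ((div_lt_one ht).2 hst)).const_mul C
    simpa using this
  refine ge_of_tendsto' hlim fun n => ?_
  rw [div_pow, ← mul_div_assoc, le_div_iff₀ (pow_pos ht n)]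
  exact h n

lemma cond_to_QSeq {a : ℕ → ℝ} {μ : Measure ℝ} (hμ : IsRepMeas a μ) {θ1 θ2 : ℝ}
    (h1 : 0 ≤ θ1) (h12 : θ1 < θ2)
    (hs1 : θ1 ∈ msupport μ) (hlub : IsLUB (msupport μ) θ2) (hgap : μ (Ioo θ1 θ2) = 0) :
    QSeq a θ1 θ2 := by
  have hθ2 : 0 < θ2 := lt_of_le_of_lt h1 h12
  have hIoi : μ (Ioi θ2) = 0 := by
    refine measure_mono_null (fun x hx => ?_) (msupport_compl_null μ)
    intro hmem
    exact absurd (hlub.1 hmem) (not_le.2 hx)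
  have hθ2mem : θ2 ∈ msupport μ :=
    (isClosed_msupport μ).closure_subset (hlub.mem_closure ⟨θ1, hs1⟩)
  have hatom : 0 < μ {θ2} := by
    have hU : 0 < μ (Ioo θ1 (θ2 + 1)) :=
      hθ2mem (Ioo θ1 (θ2 + 1)) isOpen_Ioo ⟨h12, by linarith⟩
    have hsub : Ioo θ1 (θ2 + 1) ⊆ Ioo θ1 θ2 ∪ {θ2} ∪ Ioi θ2 := by
      intro x hx
      rcases lt_trichotomy x θ2 with h | h | h
      · exact Or.inl (Or.inl ⟨hx.1, h⟩)
      · exact Or.inl (Or.inr h)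
      · exact Or.inr h
    calc (0 : ENNReal) < μ (Ioo θ1 (θ2 + 1)) := hU
    _ ≤ μ (Ioo θ1 θ2 ∪ {θ2} ∪ Ioi θ2) := measure_mono hsub
    _ ≤ μ (Ioo θ1 θ2 ∪ {θ2}) + μ (Ioi θ2) := measure_union_le _ _
    _ ≤ μ (Ioo θ1 θ2) + μ {θ2} + μ (Ioi θ2) := by gcongr; exact measure_union_le _ _
    _ = μ {θ2} := by rw [hgap, hIoi]; simp
  set c : ℝ := (μ {θ2}).toReal with hcdef
  have hc : 0 < c := ENNReal.toReal_pos hatom.ne' (repMeas_fin hμ)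
  refine ⟨c, hc, ⟨a 0, hμ.1 0, fun n => ⟨?_, ?_⟩⟩, ?_⟩
  · have := mom_ge_decomp hμ hθ2.le le_rfl MeasurableSet.empty
      (empty_subset (Ici 0)) (notMem_empty θ2) n
    simpa using this
  · exact mom_le_decomp hμ hθ2.le h1 hIoi hgap n
  · intro ε hε
    set S : Set ℝ := Ioo (θ1 - ε) θ2 ∩ Ici 0 with hSdef
    have hS0 : 0 < μ (Ioo (θ1 - ε) θ2) := hs1 _ isOpen_Ioo ⟨by linarith, h12⟩
    have hSpos : 0 < μ S := by
      by_contra h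
      push_neg at h
      have hz : μ S = 0 := le_antisymm h zero_le
      have : μ (Ioo (θ1 - ε) θ2) ≤ μ S + μ (Iio 0) := by
        refine le_trans (measure_mono ?_) (measure_union_le _ _)
        intro x hx
        rcases le_or_gt 0 x with h0 | h0
        · exact Or.inl ⟨hx, h0⟩
        · exact Or.inr h0
      rw [hz, hμ.2.1] at this
      simp at this
      exact absurd this (by simpa using hS0.ne')
    refine ⟨(μ S).toReal, ENNReal.toReal_pos hSpos.ne' (repMeas_fin hμ), fun n => ?_⟩
    refine mom_ge_decomp hμ hθ2.le (le_max_right _ _)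
      ((measurableSet_Ioo).inter measurableSet_Ici) ?_ ?_ n
    · intro x hx
      exact max_le hx.1.1.le hx.2
    · intro hmem
      exact absurd hmem.1.2 (lt_irrefl θ2)

lemma QSeq_to_cond {a : ℕ → ℝ} {μ : Measure ℝ} (hμ : IsRepMeas a μ) {θ1 θ2 : ℝ}
    (h1 : 0 ≤ θ1) (h12 : θ1 < θ2) (hQ : QSeq a θ1 θ2) :
    θ1 ∈ msupport μ ∧ IsLUB (msupport μ) θ2 ∧ μ (Ioo θ1 θ2) = 0 := by
  have hθ2 : 0 < θ2 := lt_of_le_of_lt h1 h12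
  obtain ⟨c, hc, ⟨C, hC, hbd⟩, hlow⟩ := hQ
  have hlo : ∀ n : ℕ, c * θ2 ^ n ≤ a n := fun n => (hbd n).1
  have hup : ∀ n : ℕ, a n ≤ c * θ2 ^ n + C * θ1 ^ n := fun n => (hbd n).2
  -- no mass above θ2
  have hIoiS : ∀ s : ℝ, θ2 < s → μ (Ioi s) = 0 := by
    intro s hs
    by_contra hz
    have hm0 : 0 < (μ (Ioi s)).toReal :=
      ENNReal.toReal_pos hz (repMeas_fin hμ)
    have hkey : ∀ n : ℕ, (μ (Ioi s)).toReal * s ^ n ≤ (c + C) * θ2 ^ n := by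
      intro n
      have h := mom_ge_decomp hμ hθ2.le (le_of_lt (lt_trans hθ2 hs)) measurableSet_Ioi
        (fun x hx => mem_Ici.2 (le_of_lt (mem_Ioi.1 hx))) (fun hmem => absurd hmem (not_lt.2 hs.le)) n
      have h2 := hup n
      have h3 : C * θ1 ^ n ≤ C * θ2 ^ n :=
        mul_le_mul_of_nonneg_left (pow_le_pow_left₀ h1 h12.le n) hC
      have h4 : 0 ≤ (μ {θ2}).toReal * θ2 ^ n :=
        mul_nonneg ENNReal.toReal_nonneg (pow_nonneg hθ2.le n)
      have h5 : (c + C) * θ2 ^ n = c * θ2 ^ n + C * θ2 ^ n := by ring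
      linarith
    have := ratio_limit hθ2.le hs (by linarith) hkey
    linarith
  have hIoi : μ (Ioi θ2) = 0 := by
    refine measure_mono_null (fun x hx => ?_)
      (measure_iUnion_null (s := fun n : ℕ => Ioi (θ2 + (n + 1 : ℝ)⁻¹))
        fun n => hIoiS _ (lt_add_of_pos_right θ2 (by positivity)))
    obtain ⟨n, hn⟩ := exists_nat_one_div_lt (show (0:ℝ) < x - θ2 from sub_pos.2 hx)
    refine mem_iUnion.2 ⟨n, ?_⟩
    simp only [mem_Ioi]
    rw [one_div] at hn
    linarith
  have hgap : μ (Ioo θ1 θ2) = 0 := gap_null hμ h1 h12 hc.le hC hlo hup hIoi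
  -- the atom at θ2 has weight between c and c
  set τ : ℝ := (μ {θ2}).toReal with hτdef
  have hτc : τ ≤ c := by
    have : τ - c ≤ 0 := by
      refine ratio_limit h1 h12 hC fun n => ?_
      have h := mom_ge_decomp hμ hθ2.le le_rfl MeasurableSet.empty
        (empty_subset (Ici 0)) (notMem_empty θ2) n
      simp only [measure_empty, ENNReal.toReal_zero, zero_mul, add_zero] at h
      have h2 := hup n
      have h5 : (τ - c) * θ2 ^ n = τ * θ2 ^ n - c * θ2 ^ n := by ring
      linarith
    linarith
  have hcτ : c ≤ τ := by
    have : c - τ ≤ 0 := by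
      refine ratio_limit h1 h12 (hμ.1 0) fun n => ?_
      have h := mom_le_decomp hμ hθ2.le h1 hIoi hgap n
      have h2 := hlo n
      have h5 : (c - τ) * θ2 ^ n = c * θ2 ^ n - τ * θ2 ^ n := by ring
      linarith
    linarith
  have hatom : 0 < μ {θ2} := by
    rcases eq_or_lt_of_le (zero_le : 0 ≤ μ {θ2}) with h | h
    · exfalso
      rw [hτdef] at hcτ
      rw [← h] at hcτ
      simp at hcτ
      linarith
    · exact h
  have hθ2mem : θ2 ∈ msupport μ := by
    intro U hU hθ2U
    exact lt_of_lt_of_le hatom (measure_mono (singleton_subset_iff.2 hθ2U))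
  have hlub : IsLUB (msupport μ) θ2 := by
    constructor
    · intro x hx
      by_contra hgt
      push_neg at hgt
      have := hx (Ioi θ2) isOpen_Ioi hgt
      rw [hIoi] at this
      exact lt_irrefl 0 this
    · intro b hb
      exact hb hθ2mem
  -- θ1 ∈ msupport μ
  have hθ1mem : θ1 ∈ msupport μ := by
    intro U hU hθ1U
    by_contra hz
    push_neg at hz
    have hUz : μ U = 0 := le_antisymm hz zero_le
    obtain ⟨ε, hε, hball⟩ := Metric.isOpen_iff.1 hU θ1 hθ1U
    have hballz : μ (Ioo (θ1 - ε) (θ1 + ε)) = 0 := by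
      rw [← Real.ball_eq_Ioo]
      exact measure_mono_null hball hUz
    rcases eq_or_lt_of_le h1 with hθ10 | hθ10
    · -- θ1 = 0
      have hcompl : μ ({θ2}ᶜ : Set ℝ) = 0 := by
        refine measure_mono_null (fun x hx => ?_)
          (measure_union_null hμ.2.1 (measure_union_null hballz
            (measure_union_null hgap hIoi)))
        simp only [mem_compl_iff, mem_singleton_iff] at hx
        simp only [mem_union, mem_Iio, mem_Ioo, mem_Ioi]
        rcases lt_or_ge x 0 with h0 | h0
        · exact Or.inl h0
        rcases lt_or_ge x (θ1 + ε) with h0' | h0'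
        · exact Or.inr (Or.inl ⟨by linarith, h0'⟩)
        rcases lt_trichotomy x θ2 with h2 | h2 | h2
        · refine Or.inr (Or.inr (Or.inl ⟨?_, h2⟩))
          linarith
        · exact absurd h2 hx
        · exact Or.inr (Or.inr (Or.inr h2))
      have huniv : μ Set.univ = μ {θ2} := by
        have h1' := measure_union_le (μ := μ) ({θ2} : Set ℝ) ({θ2}ᶜ : Set ℝ)
        rw [union_compl_self, hcompl, add_zero] at h1'
        exact le_antisymm h1' (measure_mono (subset_univ _))
      have ha0 : a 0 = τ := by
        have := repMeas_univ hμ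
        rw [huniv] at this
        rw [hτdef, this, ENNReal.toReal_ofReal (hμ.1 0)]
      obtain ⟨m, hm, hmn⟩ := hlow 1 one_pos
      have := hmn 0
      simp only [pow_zero, mul_one] at this
      linarith
    · -- θ1 > 0
      set e : ℝ := min ε θ1 with hedef
      have he : 0 < e := lt_min hε hθ10
      have heθ1 : e ≤ θ1 := min_le_right _ _
      have hball' : μ (Ioo (θ1 - e) (θ1 + e)) = 0 := by
        refine measure_mono_null ?_ hballz
        intro x hx
        constructor
        · have : e ≤ ε := min_le_left _ _
          linarith [hx.1]
        · have : e ≤ ε := min_le_left _ _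
          linarith [hx.2]
      have hgap' : μ (Ioo (θ1 - e) θ2) = 0 := by
        refine measure_mono_null (fun x hx => ?_)
          (measure_union_null hball' hgap)
        rcases lt_or_ge x (θ1 + e) with h' | h'
        · exact Or.inl ⟨hx.1, h'⟩
        · exact Or.inr ⟨by linarith, hx.2⟩
      obtain ⟨m, hm, hmn⟩ := hlow (e / 2) (by positivity)
      have hmaxeq : max (θ1 - e / 2) 0 = θ1 - e / 2 := max_eq_left (by linarith)
      have hkey : ∀ n : ℕ, m * (θ1 - e / 2) ^ n ≤ a 0 * (θ1 - e) ^ n := by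
        intro n
        have hle := mom_le_decomp hμ hθ2.le (by linarith : (0:ℝ) ≤ θ1 - e) hIoi hgap' n
        have hge := hmn n
        rw [hmaxeq] at hge
        have h5 : τ * θ2 ^ n ≤ c * θ2 ^ n :=
          mul_le_mul_of_nonneg_right hτc (pow_nonneg hθ2.le n)
        linarith
      have := ratio_limit (by linarith : (0:ℝ) ≤ θ1 - e) (by linarith) (hμ.1 0) hkey
      linarith
  exact ⟨hθ1mem, hlub, hgap⟩

theorem stmt11 (a : ℕ → ℝ) (μ ν : Measure ℝ) (κ : ℕ) (hκ : 2 ≤ κ)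
    (hμ : IsRepMeas a μ)
    (hν : IsRepMeas (fun n => a n ^ (1 / (κ : ℝ))) ν)
    (θ1 θ2 : ℝ) (h0 : 0 ≤ θ1) (h12 : θ1 < θ2)
    (α β : ℝ)
    (hα : α = θ1 / θ2 * θ2 ^ (1 / (κ : ℝ)))
    (hβ : β = θ2 ^ (1 / (κ : ℝ))) :
    (θ1 ∈ msupport μ ∧ IsLUB (msupport μ) θ2 ∧ μ (Set.Ioo θ1 θ2) = 0) ↔
      (α ∈ msupport ν ∧ IsLUB (msupport ν) β ∧ ν (Set.Ioo α β) = 0) := by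
  have hθ2 : 0 < θ2 := lt_of_le_of_lt h0 h12
  have hκ0 : 0 < (κ : ℝ) := by positivity
  have hκne : (κ : ℝ) ≠ 0 := ne_of_gt hκ0
  have hp : 0 < 1 / (κ : ℝ) := by positivity
  have hβ0 : 0 < β := by rw [hβ]; exact Real.rpow_pos_of_pos hθ2 _
  have hα0 : 0 ≤ α := by
    rw [hα]
    exact mul_nonneg (div_nonneg h0 hθ2.le) (Real.rpow_pos_of_pos hθ2 _).le
  have hαβ : α < β := by
    rw [hα, hβ]
    exact mul_lt_of_lt_one_left (Real.rpow_pos_of_pos hθ2 _) ((div_lt_one hθ2).2 h12)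
  constructor
  · rintro ⟨hA1, hA2, hA3⟩
    have hQ := cond_to_QSeq hμ h0 h12 hA1 hA2 hA3
    have hQb := QSeq_rpow h0 h12 hp hQ
    rw [← hα, ← hβ] at hQb
    exact QSeq_to_cond hν hα0 hαβ hQb
  · rintro ⟨hB1, hB2, hB3⟩
    have hQb := cond_to_QSeq hν hα0 hαβ hB1 hB2 hB3
    have hQa := QSeq_rpow hα0 hαβ hκ0 hQb
    have hβκ : β ^ (κ : ℝ) = θ2 := by
      rw [hβ, ← Real.rpow_mul hθ2.le, one_div_mul_cancel hκne, Real.rpow_one]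
    have hαβκ : α / β * β ^ (κ : ℝ) = θ1 := by
      rw [hβκ, hα, hβ]
      have hne : θ2 ^ (1 / (κ : ℝ)) ≠ 0 := ne_of_gt (Real.rpow_pos_of_pos hθ2 _)
      field_simp
    have hfun : (fun n => (fun n => a n ^ (1 / (κ : ℝ))) n ^ (κ : ℝ)) = a := by
      funext n
      simp only
      rw [← Real.rpow_mul (hμ.1 n), one_div_mul_cancel hκne, Real.rpow_one]
    rw [hfun, hαβκ, hβκ] at hQa
    exact QSeq_to_cond hμ h0 h12 hQa
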